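/- arXiv:2505.02002 — 3 statements merged into one kernel-verified Lean document; each statement's English description precedes it below -/
import Mathlib

section
/- Let B be symmetric PSD with operator norm at most 1, ξ ∈ R^p, 0 < ω < 1. Then ξ^T ((I - ωB)^{-1} - (I + ωB)^{-1}) ξ ≤ (2ω / ((1+ω)(1-ω))) ξ^T B ξ. -/
open Matrix

/-- `ξᵀ((I - ωB)⁻¹ - (I + ωB)⁻¹)ξ ≤ (2ω/((1+ω)(1-ω))) ξᵀBξ`. -/
theorem stmt4 {p : ℕ} (B : Matrix (Fin p) (Fin p) ℝ)
    (hB : B.PosSemidef) (hBnorm : ∀ x : Fin p → ℝ, x ⬝ᵥ B *ᵥ x ≤ x ⬝ᵥ x)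
    (ξ : Fin p → ℝ) (ω : ℝ) (hω0 : 0 < ω) (hω1 : ω < 1) :
    ξ ⬝ᵥ ((1 - ω • B)⁻¹ - (1 + ω • B)⁻¹) *ᵥ ξ ≤
      (2 * ω / ((1 + ω) * (1 - ω))) * (ξ ⬝ᵥ B *ᵥ ξ) := by
  have hH := hB.1
  set U : Matrix (Fin p) (Fin p) ℝ := (hH.eigenvectorUnitary : Matrix (Fin p) (Fin p) ℝ) with hU
  set lam : Fin p → ℝ := hH.eigenvalues with hlam
  have hUU : U * star U = 1 := (Matrix.mem_unitaryGroup_iff).mp hH.eigenvectorUnitary.2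
  have hUU' : star U * U = 1 := (Matrix.mem_unitaryGroup_iff').mp hH.eigenvectorUnitary.2
  have hBspec : B = U * diagonal lam * star U := by
    have := hH.spectral_theorem
    simpa using this
  -- eigenvalue bounds
  have hlam0 : ∀ i, 0 ≤ lam i := hB.eigenvalues_nonneg
  have hlam1 : ∀ i, lam i ≤ 1 := by
    intro i
    have hv := hH.eigenvalues_eq i
    set v : Fin p → ℝ := ⇑(hH.eigenvectorBasis i) with hvdef
    have hnorm : v ⬝ᵥ v = 1 := by
      have h1 : ‖hH.eigenvectorBasis i‖ = 1 := hH.eigenvectorBasis.orthonormal.1 i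
      have h2 : (inner ℝ (hH.eigenvectorBasis i) (hH.eigenvectorBasis i) : ℝ) = 1 := by
        rw [real_inner_self_eq_norm_sq, h1]; norm_num
      rw [← h2, EuclideanSpace.inner_eq_star_dotProduct]
      simp only [dotProduct, RCLike.star_def, conj_trivial]
      rfl
    have := hBnorm v
    rw [hnorm] at this
    calc lam i = v ⬝ᵥ B *ᵥ v := by simpa [hvdef, dotProduct] using hv
      _ ≤ 1 := this
  -- conjugation lemma
  have hconj : ∀ d : Fin p → ℝ, (∀ i, d i ≠ 0) →
      (U * diagonal d * star U)⁻¹ = U * diagonal (fun i => (d i)⁻¹) * star U := by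
    intro d hd
    apply inv_eq_right_inv
    calc U * diagonal d * star U * (U * diagonal (fun i => (d i)⁻¹) * star U)
        = U * (diagonal d * (star U * U) * diagonal (fun i => (d i)⁻¹)) * star U := by
          noncomm_ring
      _ = 1 := by
          rw [hUU', mul_one, diagonal_mul_diagonal]
          have : (fun i => d i * (d i)⁻¹) = fun _ : Fin p => (1:ℝ) := by
            funext i; exact mul_inv_cancel₀ (hd i)
          rw [this, diagonal_one, mul_one, hUU]
  -- expressing 1 ± ω•B as conjugated diagonal
  have hone : (1 : Matrix (Fin p) (Fin p) ℝ) = U * diagonal (fun _ => (1:ℝ)) * star U := by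
    rw [diagonal_one, mul_one, hUU]
  have hplus : (1 + ω • B) = U * diagonal (fun i => 1 + ω * lam i) * star U := by
    rw [hBspec]
    have hds : (diagonal fun i => ω * lam i) = ω • diagonal lam := by
      rw [← diagonal_smul]; rfl
    have : ω • (U * diagonal lam * star U) = U * diagonal (fun i => ω * lam i) * star U := by
      rw [hds, Matrix.mul_smul, Matrix.smul_mul]
    rw [this]
    nth_rewrite 1 [hone]
    rw [← add_mul, ← mul_add, diagonal_add]
    try rfl
  have hminus : (1 - ω • B) = U * diagonal (fun i => 1 - ω * lam i) * star U := by
    rw [hBspec]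
    have hds : (diagonal fun i => ω * lam i) = ω • diagonal lam := by
      rw [← diagonal_smul]; rfl
    have : ω • (U * diagonal lam * star U) = U * diagonal (fun i => ω * lam i) * star U := by
      rw [hds, Matrix.mul_smul, Matrix.smul_mul]
    rw [this]
    nth_rewrite 1 [hone]
    rw [← sub_mul, ← mul_sub, diagonal_sub]
    try rfl
  have hωlam_lt : ∀ i, ω * lam i < 1 := fun i =>
    lt_of_le_of_lt (by nlinarith [hlam0 i, hlam1 i]) hω1
  have hdm : ∀ i, (1 - ω * lam i) ≠ 0 := fun i => by nlinarith [hωlam_lt i]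
  have hdp : ∀ i, (1 + ω * lam i) ≠ 0 := fun i => by nlinarith [hlam0 i, hω0.le]
  -- quadratic form via y
  set y : Fin p → ℝ := star U *ᵥ ξ with hy
  have hquad : ∀ d : Fin p → ℝ, ξ ⬝ᵥ (U * diagonal d * star U) *ᵥ ξ = ∑ i, d i * y i ^ 2 := by
    intro d
    rw [← mulVec_mulVec, ← mulVec_mulVec, dotProduct_mulVec ξ U]
    have : ξ ᵥ* U = y := by
      rw [hy, star_eq_conjTranspose, conjTranspose_eq_transpose_of_trivial, mulVec_transpose]
    rw [this]
    simp [dotProduct, mulVec_diagonal]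
    apply Finset.sum_congr rfl
    intro i _
    ring
  -- put it together
  have hinvm := hconj _ hdm
  have hinvp := hconj _ hdp
  rw [hminus, hplus, hinvm, hinvp, ← sub_mul, ← mul_sub, diagonal_sub, hquad]
  try simp only [Pi.sub_apply]
  rw [show ξ ⬝ᵥ B *ᵥ ξ = ∑ i, lam i * y i ^ 2 by rw [hBspec, hquad]]
  rw [Finset.mul_sum]
  apply Finset.sum_le_sum
  intro i _
  have h0 := hlam0 i
  have h1 := hlam1 i
  have hm : (0:ℝ) < 1 - ω * lam i := by nlinarith [hωlam_lt i]
  have hp : (0:ℝ) < 1 + ω * lam i := by nlinarith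
  have hy2 : (0:ℝ) ≤ y i ^ 2 := sq_nonneg _
  have hc : (0:ℝ) < (1 + ω) * (1 - ω) := by nlinarith
  have key : (1 - ω * lam i)⁻¹ - (1 + ω * lam i)⁻¹ ≤ 2 * ω / ((1 + ω) * (1 - ω)) * lam i := by
    have e : (1 - ω * lam i)⁻¹ - (1 + ω * lam i)⁻¹
        = 2 * ω * lam i / ((1 - ω * lam i) * (1 + ω * lam i)) := by
      field_simp
      ring
    rw [e, div_mul_eq_mul_div, div_le_div_iff₀ (mul_pos hm hp) hc]
    nlinarith [mul_nonneg (sq_nonneg ω)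
      (mul_nonneg (mul_nonneg (mul_nonneg hω0.le h0) (sub_nonneg.2 h1))
        (by linarith : (0:ℝ) ≤ 1 + lam i))]
  calc ((1 - ω * lam i)⁻¹ - (1 + ω * lam i)⁻¹) * y i ^ 2
      ≤ (2 * ω / ((1 + ω) * (1 - ω)) * lam i) * y i ^ 2 := by
        apply mul_le_mul_of_nonneg_right key hy2
    _ = 2 * ω / ((1 + ω) * (1 - ω)) * (lam i * y i ^ 2) := by ring
end

section
/- Let B be symmetric PSD with operator norm at most 1, ξ ∈ R^p, 0 < ω < 1. Then the vector ξ - (I - ωB)^{-1} ξ satisfies (ξ - (I-ωB)^{-1}ξ)^T (I - ωB) (ξ - (I-ωB)^{-1}ξ) ≤ (ω^2/(1-ω)) ξ^T B ξ. -/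
open Matrix

/-- Cauchy–Schwarz for a real PSD bilinear form. -/
lemma psd_cauchy_schwarz {p : ℕ} (B : Matrix (Fin p) (Fin p) ℝ)
    (hB : B.PosSemidef) (u v : Fin p → ℝ) :
    (u ⬝ᵥ B *ᵥ v) ^ 2 ≤ (u ⬝ᵥ B *ᵥ u) * (v ⬝ᵥ B *ᵥ v) := by
  have hsym : ∀ x y : Fin p → ℝ, x ⬝ᵥ B *ᵥ y = y ⬝ᵥ B *ᵥ x := by
    intro x y
    have hBt : Bᵀ = B := by
      have := hB.1
      rwa [Matrix.IsHermitian, conjTranspose_eq_transpose_of_trivial] at this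
    rw [Matrix.dotProduct_mulVec, ← hBt, Matrix.vecMul_transpose, hBt,
      dotProduct_comm]
  have hq : ∀ r : ℝ, 0 ≤ (v ⬝ᵥ B *ᵥ v) * (r * r) + (2 * (u ⬝ᵥ B *ᵥ v)) * r
      + (u ⬝ᵥ B *ᵥ u) := by
    intro r
    have h0 := hB.dotProduct_mulVec_nonneg (u + r • v)
    simp only [star_trivial] at h0
    have hexp : (u + r • v) ⬝ᵥ B *ᵥ (u + r • v)
        = (v ⬝ᵥ B *ᵥ v) * (r * r) + (2 * (u ⬝ᵥ B *ᵥ v)) * r + (u ⬝ᵥ B *ᵥ u) := by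
      rw [Matrix.mulVec_add, Matrix.mulVec_smul, dotProduct_add,
        add_dotProduct, add_dotProduct, dotProduct_smul,
        smul_dotProduct, smul_dotProduct, dotProduct_smul,
        hsym v u]
      simp only [smul_eq_mul]
      ring
    rw [hexp] at h0
    exact h0
  have hd := discrim_le_zero hq
  rw [discrim] at hd
  nlinarith [hd]

/-- The vector `ξ - (I - ωB)⁻¹ξ` is small in the `(I - ωB)`-norm. -/
theorem stmt5 {p : ℕ} (B : Matrix (Fin p) (Fin p) ℝ)
    (hB : B.PosSemidef) (hBnorm : ∀ x : Fin p → ℝ, x ⬝ᵥ B *ᵥ x ≤ x ⬝ᵥ x)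
    (ξ : Fin p → ℝ) (ω : ℝ) (hω0 : 0 < ω) (hω1 : ω < 1) :
    (ξ - (1 - ω • B)⁻¹ *ᵥ ξ) ⬝ᵥ (1 - ω • B) *ᵥ (ξ - (1 - ω • B)⁻¹ *ᵥ ξ) ≤
      ω ^ 2 / (1 - ω) * (ξ ⬝ᵥ B *ᵥ ξ) := by
  set M : Matrix (Fin p) (Fin p) ℝ := 1 - ω • B with hM
  have hBpsd : ∀ x : Fin p → ℝ, 0 ≤ x ⬝ᵥ B *ᵥ x := by
    intro x
    have := hB.dotProduct_mulVec_nonneg x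
    simpa using this
  -- M is positive definite
  have hMherm : M.IsHermitian := by
    have hBt : Bᴴ = B := hB.1
    have hBt' : Bᵀ = B := by rw [← conjTranspose_eq_transpose_of_trivial]; exact hBt
    simp [hM, Matrix.IsHermitian, conjTranspose_sub, conjTranspose_smul, hBt']
  have hMpos : M.PosDef := by
    refine Matrix.PosDef.of_dotProduct_mulVec_pos hMherm (fun x hx => ?_)
    have h1 : x ⬝ᵥ M *ᵥ x = x ⬝ᵥ x - ω * (x ⬝ᵥ B *ᵥ x) := by
      simp [hM, Matrix.sub_mulVec, Matrix.smul_mulVec, dotProduct_sub,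
        dotProduct_smul]
    have hxx : 0 < x ⬝ᵥ x := by
      have : x ⬝ᵥ x ≠ 0 := fun h => hx (by
        ext i
        have := dotProduct_self_eq_zero.mp h
        simpa using congrFun this i)
      have hnn : 0 ≤ x ⬝ᵥ x :=
        Finset.sum_nonneg fun i _ => mul_self_nonneg (x i)
      exact lt_of_le_of_ne hnn (Ne.symm this)
    have hb := hBnorm x
    have hbp := hBpsd x
    simp only [star_trivial]
    rw [h1]
    nlinarith
  have hdet : IsUnit M.det := isUnit_iff_ne_zero.mpr (ne_of_gt hMpos.det_pos)
  have hMinv : M⁻¹ * M = 1 := Matrix.nonsing_inv_mul M hdet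
  have hMinv' : M * M⁻¹ = 1 := Matrix.mul_nonsing_inv M hdet
  set z : Fin p → ℝ := M⁻¹ *ᵥ (B *ᵥ ξ) with hz
  have hMz : M *ᵥ z = B *ᵥ ξ := by
    rw [hz, Matrix.mulVec_mulVec, hMinv', Matrix.one_mulVec]
  -- the error vector
  have hη : ξ - M⁻¹ *ᵥ ξ = (-ω) • z := by
    have h1 : ξ = M⁻¹ *ᵥ (M *ᵥ ξ) := by
      rw [Matrix.mulVec_mulVec, hMinv, Matrix.one_mulVec]
    calc ξ - M⁻¹ *ᵥ ξ = M⁻¹ *ᵥ (M *ᵥ ξ) - M⁻¹ *ᵥ ξ := by rw [← h1]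
      _ = M⁻¹ *ᵥ (M *ᵥ ξ - ξ) := by rw [Matrix.mulVec_sub]
      _ = M⁻¹ *ᵥ ((-ω) • (B *ᵥ ξ)) := by
          congr 1
          simp [hM, Matrix.sub_mulVec, Matrix.smul_mulVec, Matrix.one_mulVec,
            neg_smul]
      _ = (-ω) • z := by rw [Matrix.mulVec_smul, hz]
  set t : ℝ := z ⬝ᵥ M *ᵥ z with ht
  have hLHS : (ξ - M⁻¹ *ᵥ ξ) ⬝ᵥ M *ᵥ (ξ - M⁻¹ *ᵥ ξ) = ω ^ 2 * t := by
    rw [hη, Matrix.mulVec_smul, smul_dotProduct, dotProduct_smul, ht]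
    simp only [smul_eq_mul]
    ring
  have htB : t = z ⬝ᵥ B *ᵥ ξ := by rw [ht, hMz]
  have hzz : z ⬝ᵥ B *ᵥ z ≤ z ⬝ᵥ z := hBnorm z
  have hzB : 0 ≤ z ⬝ᵥ B *ᵥ z := hBpsd z
  have htexp : t = z ⬝ᵥ z - ω * (z ⬝ᵥ B *ᵥ z) := by
    simp [ht, hM, Matrix.sub_mulVec, Matrix.smul_mulVec, dotProduct_sub,
      dotProduct_smul]
  have htlb : (1 - ω) * (z ⬝ᵥ B *ᵥ z) ≤ t := by rw [htexp]; nlinarith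
  have ht0 : 0 ≤ t := le_trans (by nlinarith) htlb
  have hcs : (z ⬝ᵥ B *ᵥ ξ) ^ 2 ≤ (z ⬝ᵥ B *ᵥ z) * (ξ ⬝ᵥ B *ᵥ ξ) := by
    have := psd_cauchy_schwarz B hB z ξ
    exact this
  have hξB : 0 ≤ ξ ⬝ᵥ B *ᵥ ξ := hBpsd ξ
  have hω1' : 0 < 1 - ω := by linarith
  -- key inequality : (1 - ω) * t ≤ ξ ⬝ᵥ B ξ
  have hkey : (1 - ω) * t ≤ ξ ⬝ᵥ B *ᵥ ξ := by
    rcases eq_or_lt_of_le ht0 with h0 | hpos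
    · rw [← h0]; simpa using hξB
    · have h1 : t ^ 2 ≤ (z ⬝ᵥ B *ᵥ z) * (ξ ⬝ᵥ B *ᵥ ξ) := by rw [htB]; exact hcs
      have h2 : (z ⬝ᵥ B *ᵥ z) * (ξ ⬝ᵥ B *ᵥ ξ) ≤ (t / (1 - ω)) * (ξ ⬝ᵥ B *ᵥ ξ) := by
        apply mul_le_mul_of_nonneg_right _ hξB
        rw [le_div_iff₀ hω1']
        nlinarith
      have h3 : t ^ 2 ≤ (t / (1 - ω)) * (ξ ⬝ᵥ B *ᵥ ξ) := le_trans h1 h2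
      rw [div_mul_eq_mul_div, le_div_iff₀ hω1'] at h3
      nlinarith
  rw [hLHS, div_mul_eq_mul_div, le_div_iff₀ hω1']
  nlinarith
end

section
/- Let U be a symmetric p x p matrix with U ≥ I (in the positive semidefinite order), let r > 0, τ ≥ 0 with τ r ≤ 1/3, and let s ∈ R^p satisfy (3/4) r ≤ ||s|| ≤ r. Then max over ||u|| ≤ r of ( (τ/3)||u||^3 - (u-s)^T U (u-s) ) ≤ (τ/2) ||s||^3. -/
open Matrix

noncomputable def vnorm {p : ℕ} (x : Fin p → ℝ) : ℝ := Real.sqrt (x ⬝ᵥ x)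

lemma vnorm_nonneg {p : ℕ} (x : Fin p → ℝ) : 0 ≤ vnorm x := Real.sqrt_nonneg _

lemma dot_self_nonneg {p : ℕ} (x : Fin p → ℝ) : 0 ≤ x ⬝ᵥ x :=
  Finset.sum_nonneg fun i _ => mul_self_nonneg (x i)

lemma sq_vnorm {p : ℕ} (x : Fin p → ℝ) : vnorm x ^ 2 = x ⬝ᵥ x :=
  Real.sq_sqrt (dot_self_nonneg x)

lemma cs {p : ℕ} (u s : Fin p → ℝ) : u ⬝ᵥ s ≤ vnorm u * vnorm s := by
  have h := Finset.sum_mul_sq_le_sq_mul_sq Finset.univ u s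
  have h1 : (u ⬝ᵥ s) ^ 2 ≤ (u ⬝ᵥ u) * (s ⬝ᵥ s) := by
    simpa [dotProduct, sq] using h
  have h2 : (u ⬝ᵥ s) ^ 2 ≤ (vnorm u * vnorm s) ^ 2 := by
    rw [mul_pow, sq_vnorm, sq_vnorm]; exact h1
  have h3 : 0 ≤ vnorm u * vnorm s := mul_nonneg (vnorm_nonneg u) (vnorm_nonneg s)
  nlinarith [sq_nonneg (u ⬝ᵥ s - vnorm u * vnorm s), sq_nonneg (u ⬝ᵥ s + vnorm u * vnorm s)]

lemma key_scalar (r τ a b : ℝ) (hr : 0 < r) (hτ : 0 ≤ τ) (hτr : τ * r ≤ 1 / 3)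
    (ha0 : 0 ≤ a) (ha : a ≤ r) (hb1 : 3 / 4 * r ≤ b) (hb2 : b ≤ r) :
    τ / 3 * a ^ 3 - (a - b) ^ 2 ≤ τ / 2 * b ^ 3 := by
  have hb0 : 0 ≤ b := by linarith
  rcases le_or_gt (a ^ 3 / 3) (b ^ 3 / 2) with h | h
  · nlinarith [mul_nonneg hτ (by linarith : (0:ℝ) ≤ b ^ 3 / 2 - a ^ 3 / 3), sq_nonneg (a - b)]
  · have hab : b < a := by
      by_contra hc
      push_neg at hc
      have h3 := pow_le_pow_left₀ ha0 hc 3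
      nlinarith [pow_nonneg ha0 3]
    have hτ' : τ ≤ 1 / (3 * r) := by
      rw [le_div_iff₀ (by linarith)]; linarith
    have hpoly : a ^ 3 / 3 - b ^ 3 / 2 ≤ 3 * r * (a - b) ^ 2 := by
      have c1 : 0 ≤ (a - b) ^ 2 * (r - a / 3 - 2 * b / 3) :=
        mul_nonneg (sq_nonneg _) (by linarith)
      have c2 : 0 ≤ (4 * r * (a - b) - b ^ 2) ^ 2 := sq_nonneg _
      have c3 : 0 ≤ b ^ 3 * (4 * r - 3 * b) :=
        mul_nonneg (pow_nonneg hb0 3) (by linarith)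
      nlinarith [mul_nonneg hr.le c1, c2, c3, hr.le, mul_pos hr hr]
    have h3r : (0:ℝ) < 3 * r := by linarith
    have h1 : τ * (a ^ 3 / 3 - b ^ 3 / 2) ≤ (a ^ 3 / 3 - b ^ 3 / 2) * (1 / (3 * r)) := by
      rw [mul_comm]; exact mul_le_mul_of_nonneg_left hτ' (by linarith)
    have h2 : (a ^ 3 / 3 - b ^ 3 / 2) * (1 / (3 * r)) ≤ (a - b) ^ 2 := by
      rw [mul_one_div, div_le_iff₀ h3r]; nlinarith
    nlinarith


/-- Lemma on cubic-penalized quadratic maximization over a ball. -/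
theorem stmt7 {p : ℕ} (U : Matrix (Fin p) (Fin p) ℝ)
    (hUsym : U.IsHermitian) (hU : (U - 1).PosSemidef)
    (r τ : ℝ) (hr : 0 < r) (hτ : 0 ≤ τ) (hτr : τ * r ≤ 1 / 3)
    (s : Fin p → ℝ) (hs1 : (3 / 4) * r ≤ vnorm s) (hs2 : vnorm s ≤ r) :
    ∀ u : Fin p → ℝ, vnorm u ≤ r →
      τ / 3 * vnorm u ^ 3 - (u - s) ⬝ᵥ U *ᵥ (u - s) ≤ τ / 2 * vnorm s ^ 3 := by
  intro u hu
  set a := vnorm u with ha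
  set b := vnorm s with hb
  have ha0 := vnorm_nonneg u
  have hb0 := vnorm_nonneg s
  have hq : (u - s) ⬝ᵥ (u - s) ≤ (u - s) ⬝ᵥ U *ᵥ (u - s) := by
    have h2 := hU.dotProduct_mulVec_nonneg (u - s)
    simp only [star_trivial, Matrix.sub_mulVec, Matrix.one_mulVec, dotProduct_sub] at h2
    have h3 : (u - s) ⬝ᵥ (u - s) = (u - s) ⬝ᵥ u - (u - s) ⬝ᵥ s := dotProduct_sub _ _ _
    linarith
  have hd : (a - b) ^ 2 ≤ (u - s) ⬝ᵥ (u - s) := by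
    have hexp : (u - s) ⬝ᵥ (u - s) = u ⬝ᵥ u - 2 * (u ⬝ᵥ s) + s ⬝ᵥ s := by
      simp only [dotProduct_sub, sub_dotProduct, dotProduct_comm s u]; ring
    have hcs := cs u s
    have h1 := sq_vnorm u
    have h2 := sq_vnorm s
    nlinarith
  have hk := key_scalar r τ a b hr hτ hτr ha0 hu hs1 hs2
  linarith
end
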